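/- Let (β, γ, X_i, Y_j, N_h) be a bipartite coherent configuration equipped with a second basis L_r, R_s, D_h as above, with Krein parameters Δ_{ij}(h) defined by D_i ∘ D_j = (1/√(|β||γ|)) Σ_{h=0}^{t̃_{βγ}} Δ_{ij}(h) D_h. Then for all 0 ≤ i, j, h ≤ t̃_{βγ} with m_h^β ≠ 0: Δ_{ij}(h) = (1/(|γ| m_h^β)) Σ_{ℓ=1}^{t_{βγ}} Q^{βγ}_{ℓ,h} Q^{βγ}_{ℓ,i} Q^{βγ}_{ℓ,j} k_ℓ^{βγ}; moreover this expression is symmetric in the two fibres, i.e., it equals (1/(|β| m_h^γ)) Σ_{ℓ=1}^{t_{βγ}} Q^{βγ}_{ℓ,h} Q^{βγ}_{ℓ,i} Q^{βγ}_{ℓ,j} k_ℓ^{γβ}, where k_ℓ^{γβ} is the common row sum of N_ℓ^T. -/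

import Mathlib

open Matrix

/-- A bipartite coherent configuration on point set `β` and block set `γ`, with
Schur idempotents `X 0, …, X tb` (on `β`), `Y 0, …, Y tg` (on `γ`) and
`N 1, …, N tbg` (from `β` to `γ`), satisfying (C1)–(C6). -/
structure BipartiteCC (β γ : Type) [Fintype β] [DecidableEq β] [Fintype γ] [DecidableEq γ] where
  tb : ℕ
  tg : ℕ
  tbg : ℕ
  tb_pos : 1 ≤ tb
  tg_pos : 1 ≤ tg
  tbg_pos : 1 ≤ tbg
  X : ℕ → Matrix β β ℝ
  Y : ℕ → Matrix γ γ ℝ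
  N : ℕ → Matrix β γ ℝ
  X_zero_one : ∀ i, i ≤ tb → ∀ u v, X i u v = 0 ∨ X i u v = 1
  Y_zero_one : ∀ j, j ≤ tg → ∀ u v, Y j u v = 0 ∨ Y j u v = 1
  N_zero_one : ∀ h, 1 ≤ h → h ≤ tbg → ∀ u v, N h u v = 0 ∨ N h u v = 1
  X_ne_zero : ∀ i, i ≤ tb → X i ≠ 0
  Y_ne_zero : ∀ j, j ≤ tg → Y j ≠ 0
  N_ne_zero : ∀ h, 1 ≤ h → h ≤ tbg → N h ≠ 0
  /-- (C1) -/
  X_zero : X 0 = 1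
  /-- (C1) -/
  Y_zero : Y 0 = 1
  /-- (C2), `ββ` block -/
  X_sum : ∑ i ∈ Finset.range (tb + 1), X i = Matrix.of fun _ _ => (1 : ℝ)
  /-- (C2), `γγ` block -/
  Y_sum : ∑ j ∈ Finset.range (tg + 1), Y j = Matrix.of fun _ _ => (1 : ℝ)
  /-- (C2), `βγ` block -/
  N_sum : ∑ h ∈ Finset.Icc 1 tbg, N h = Matrix.of fun _ _ => (1 : ℝ)
  /-- (C3) -/
  X_transpose : ∀ i, i ≤ tb → ∃ i', i' ≤ tb ∧ (X i)ᵀ = X i'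
  /-- (C3) -/
  Y_transpose : ∀ j, j ≤ tg → ∃ j', j' ≤ tg ∧ (Y j)ᵀ = Y j'
  /-- (C4) -/
  X_mul_X : ∀ i, i ≤ tb → ∀ j, j ≤ tb →
      X i * X j ∈ Submodule.span ℝ {M | ∃ i', i' ≤ tb ∧ M = X i'}
  /-- (C4) -/
  Y_mul_Y : ∀ i, i ≤ tg → ∀ j, j ≤ tg →
      Y i * Y j ∈ Submodule.span ℝ {M | ∃ j', j' ≤ tg ∧ M = Y j'}
  /-- (C4) -/
  X_mul_N : ∀ i, i ≤ tb → ∀ h, 1 ≤ h → h ≤ tbg →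
      X i * N h ∈ Submodule.span ℝ {M | ∃ h', 1 ≤ h' ∧ h' ≤ tbg ∧ M = N h'}
  /-- (C4) -/
  N_mul_Y : ∀ h, 1 ≤ h → h ≤ tbg → ∀ j, j ≤ tg →
      N h * Y j ∈ Submodule.span ℝ {M | ∃ h', 1 ≤ h' ∧ h' ≤ tbg ∧ M = N h'}
  /-- (C4) -/
  N_mul_Nt : ∀ h, 1 ≤ h → h ≤ tbg → ∀ h', 1 ≤ h' → h' ≤ tbg →
      N h * (N h')ᵀ ∈ Submodule.span ℝ {M | ∃ i, i ≤ tb ∧ M = X i}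
  /-- (C4) -/
  Nt_mul_N : ∀ h, 1 ≤ h → h ≤ tbg → ∀ h', 1 ≤ h' → h' ≤ tbg →
      (N h)ᵀ * N h' ∈ Submodule.span ℝ {M | ∃ j, j ≤ tg ∧ M = Y j}
  /-- (C5) -/
  N_comm : ∀ i, 1 ≤ i → i ≤ tbg → ∀ j, 1 ≤ j → j ≤ tbg → N i * (N j)ᵀ = N j * (N i)ᵀ
  /-- (C5) -/
  Nt_comm : ∀ i, 1 ≤ i → i ≤ tbg → ∀ j, 1 ≤ j → j ≤ tbg → (N i)ᵀ * N j = (N j)ᵀ * N i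
  /-- (C6) -/
  X_span : Submodule.span ℝ {M | ∃ i, i ≤ tb ∧ M = X i} =
      Submodule.span ℝ
        (insert 1 {M | ∃ i, 1 ≤ i ∧ i ≤ tbg ∧ ∃ j, 1 ≤ j ∧ j ≤ tbg ∧ M = N i * (N j)ᵀ})
  /-- (C6) -/
  Y_span : Submodule.span ℝ {M | ∃ j, j ≤ tg ∧ M = Y j} =
      Submodule.span ℝ
        (insert 1 {M | ∃ i, 1 ≤ i ∧ i ≤ tbg ∧ ∃ j, 1 ≤ j ∧ j ≤ tbg ∧ M = (N i)ᵀ * N j})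

/-- A second (spectral) basis `L 0, …, L tb`, `R 0, …, R tg`, `D 0, …, D (tbg - 1)` for a
bipartite coherent configuration, satisfying (D1)–(D4). -/
structure SecondBasis {β γ : Type} [Fintype β] [DecidableEq β] [Fintype γ] [DecidableEq γ]
    (cc : BipartiteCC β γ) where
  L : ℕ → Matrix β β ℝ
  R : ℕ → Matrix γ γ ℝ
  D : ℕ → Matrix β γ ℝ
  /-- the `L`'s are linearly independent -/
  L_indep : LinearIndependent ℝ (fun r : Fin (cc.tb + 1) => L r.val)
  /-- the `R`'s are linearly independent -/
  R_indep : LinearIndependent ℝ (fun r : Fin (cc.tg + 1) => R r.val)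
  /-- the `D`'s are linearly independent -/
  D_indep : LinearIndependent ℝ (fun r : Fin cc.tbg => D r.val)
  /-- the `L`'s span the same space as the `X`'s -/
  L_span : Submodule.span ℝ {M | ∃ r, r ≤ cc.tb ∧ M = L r} =
      Submodule.span ℝ {M | ∃ i, i ≤ cc.tb ∧ M = cc.X i}
  /-- the `R`'s span the same space as the `Y`'s -/
  R_span : Submodule.span ℝ {M | ∃ r, r ≤ cc.tg ∧ M = R r} =
      Submodule.span ℝ {M | ∃ j, j ≤ cc.tg ∧ M = cc.Y j}
  /-- the `D`'s span the same space as the `N`'s -/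
  D_span : Submodule.span ℝ {M | ∃ r, r ≤ cc.tbg - 1 ∧ M = D r} =
      Submodule.span ℝ {M | ∃ h, 1 ≤ h ∧ h ≤ cc.tbg ∧ M = cc.N h}
  /-- (D1) -/
  L_mul_L : ∀ r, r ≤ cc.tb → ∀ s, s ≤ cc.tb → L r * L s = if r = s then L r else 0
  /-- (D1) -/
  R_mul_R : ∀ r, r ≤ cc.tg → ∀ s, s ≤ cc.tg → R r * R s = if r = s then R r else 0
  /-- (D2) -/
  L_zero : L 0 = ((Fintype.card β : ℝ))⁻¹ • Matrix.of fun _ _ => (1 : ℝ)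
  /-- (D2) -/
  D_zero : D 0 = (Real.sqrt ((Fintype.card β : ℝ) * (Fintype.card γ : ℝ)))⁻¹ •
      Matrix.of fun _ _ => (1 : ℝ)
  /-- (D2) -/
  R_zero : R 0 = ((Fintype.card γ : ℝ))⁻¹ • Matrix.of fun _ _ => (1 : ℝ)
  /-- (D3) -/
  L_sum : ∑ r ∈ Finset.range (cc.tb + 1), L r = 1
  /-- (D3) -/
  R_sum : ∑ r ∈ Finset.range (cc.tg + 1), R r = 1
  /-- (D4) -/
  L_eq_DDt : ∀ r, r ≤ cc.tbg - 1 → L r = D r * (D r)ᵀ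
  /-- (D4) -/
  R_eq_DtD : ∀ r, r ≤ cc.tbg - 1 → R r = (D r)ᵀ * D r

namespace BCCaux

variable {β γ : Type} [Fintype β] [DecidableEq β] [Fintype γ] [DecidableEq γ]

lemma set_range_eq {M : Type*} (f : ℕ → M) (n : ℕ) :
    {A : M | ∃ r, r ≤ n ∧ A = f r} = Set.range (fun t : Fin (n + 1) => f t.val) := by
  ext A
  constructor
  · rintro ⟨r, hr, rfl⟩
    exact ⟨⟨r, by omega⟩, rfl⟩
  · rintro ⟨t, rfl⟩
    exact ⟨t.val, by omega, rfl⟩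

/-- The span of the `N`'s. -/
def Nspan (cc : BipartiteCC β γ) : Submodule ℝ (Matrix β γ ℝ) :=
  Submodule.span ℝ {M | ∃ h, 1 ≤ h ∧ h ≤ cc.tbg ∧ M = cc.N h}

/-- The span of the `X`'s. -/
def Xspan (cc : BipartiteCC β γ) : Submodule ℝ (Matrix β β ℝ) :=
  Submodule.span ℝ {M | ∃ i, i ≤ cc.tb ∧ M = cc.X i}

variable (cc : BipartiteCC β γ)

lemma N_entry_sum (u : β) (v : γ) : ∑ l ∈ Finset.Icc 1 cc.tbg, cc.N l u v = 1 := by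
  have h := congrFun (congrFun cc.N_sum u) v
  simpa [Matrix.sum_apply] using h

lemma N_entry_nonneg {l : ℕ} (hl : l ∈ Finset.Icc 1 cc.tbg) (u : β) (v : γ) :
    0 ≤ cc.N l u v := by
  rw [Finset.mem_Icc] at hl
  rcases cc.N_zero_one l hl.1 hl.2 u v with h | h <;> rw [h] <;> norm_num

lemma N_mul_zero {l l' : ℕ} (hl : l ∈ Finset.Icc 1 cc.tbg) (hl' : l' ∈ Finset.Icc 1 cc.tbg)
    (hne : l ≠ l') (u : β) (v : γ) : cc.N l u v * cc.N l' u v = 0 := by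
  rw [Finset.mem_Icc] at hl hl'
  rcases cc.N_zero_one l hl.1 hl.2 u v with h | h
  · rw [h, zero_mul]
  rcases cc.N_zero_one l' hl'.1 hl'.2 u v with h' | h'
  · rw [h', mul_zero]
  exfalso
  have hsub : ({l, l'} : Finset ℕ) ⊆ Finset.Icc 1 cc.tbg := by
    intro x hx
    rcases Finset.mem_insert.mp hx with rfl | hx
    · exact Finset.mem_Icc.mpr hl
    · rw [Finset.mem_singleton.mp hx]; exact Finset.mem_Icc.mpr hl'
  have hle : ∑ x ∈ ({l, l'} : Finset ℕ), cc.N x u v ≤ ∑ x ∈ Finset.Icc 1 cc.tbg, cc.N x u v :=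
    Finset.sum_le_sum_of_subset_of_nonneg hsub fun x hx _ => N_entry_nonneg cc hx u v
  rw [Finset.sum_pair hne, h, h', N_entry_sum cc u v] at hle
  norm_num at hle

lemma N_sq {l : ℕ} (hl : l ∈ Finset.Icc 1 cc.tbg) (u : β) (v : γ) :
    cc.N l u v * cc.N l u v = cc.N l u v := by
  rw [Finset.mem_Icc] at hl
  rcases cc.N_zero_one l hl.1 hl.2 u v with h | h <;> rw [h] <;> norm_num

lemma collapse (a b : ℕ → ℝ) (u : β) (v : γ) :
    (∑ l ∈ Finset.Icc 1 cc.tbg, a l * cc.N l u v) *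
      (∑ l ∈ Finset.Icc 1 cc.tbg, b l * cc.N l u v) =
    ∑ l ∈ Finset.Icc 1 cc.tbg, (a l * b l) * cc.N l u v := by
  rw [Finset.sum_mul_sum]
  refine Finset.sum_congr rfl fun l hl => ?_
  rw [Finset.sum_eq_single l]
  · have := N_sq cc hl u v
    linear_combination (a l * b l) * this
  · intro l' hl' hne
    have := N_mul_zero cc hl hl' (fun h => hne h.symm) u v
    linear_combination (a l * b l') * this
  · intro h
    exact absurd hl h

lemma xspan_symm {M : Matrix β β ℝ} (hM : M ∈ Xspan cc) : Mᵀ = M := by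
  have hM' : M ∈ Submodule.span ℝ
      (insert (1 : Matrix β β ℝ)
        {M | ∃ i, 1 ≤ i ∧ i ≤ cc.tbg ∧ ∃ j, 1 ≤ j ∧ j ≤ cc.tbg ∧ M = cc.N i * (cc.N j)ᵀ}) := by
    rw [← cc.X_span]; exact hM
  clear hM
  induction hM' using Submodule.span_induction with
  | mem x hx =>
    simp only [Set.mem_insert_iff, Set.mem_setOf_eq] at hx
    rcases hx with rfl | ⟨i, hi1, hi2, j, hj1, hj2, rfl⟩
    · exact Matrix.transpose_one
    · rw [Matrix.transpose_mul, Matrix.transpose_transpose]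
      exact cc.N_comm j hj1 hj2 i hi1 hi2
  | zero => exact Matrix.transpose_zero
  | add x y _ _ h1 h2 => rw [Matrix.transpose_add, h1, h2]
  | smul a x _ h => rw [Matrix.transpose_smul, h]

lemma xspan_mul {A B : Matrix β β ℝ} (hA : A ∈ Xspan cc) (hB : B ∈ Xspan cc) :
    A * B ∈ Xspan cc := by
  induction hA, hB using Submodule.span_induction₂ with
  | mem_mem x y hx hy =>
    obtain ⟨i, hi, rfl⟩ := hx
    obtain ⟨j, hj, rfl⟩ := hy
    exact cc.X_mul_X i hi j hj
  | zero_left y hy => rw [zero_mul]; exact Submodule.zero_mem _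
  | zero_right x hx => rw [mul_zero]; exact Submodule.zero_mem _
  | add_left x y z _ _ _ h1 h2 => rw [add_mul]; exact Submodule.add_mem _ h1 h2
  | add_right x y z _ _ _ h1 h2 => rw [mul_add]; exact Submodule.add_mem _ h1 h2
  | smul_left r x y _ _ h => rw [smul_mul_assoc]; exact Submodule.smul_mem _ _ h
  | smul_right r x y _ _ h => rw [mul_smul_comm]; exact Submodule.smul_mem _ _ h

lemma xspan_comm {A B : Matrix β β ℝ} (hA : A ∈ Xspan cc) (hB : B ∈ Xspan cc) :
    A * B = B * A := by
  have h1 : (A * B)ᵀ = A * B := xspan_symm cc (xspan_mul cc hA hB)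
  have h2 : Aᵀ = A := xspan_symm cc hA
  have h3 : Bᵀ = B := xspan_symm cc hB
  calc A * B = (A * B)ᵀ := h1.symm
    _ = Bᵀ * Aᵀ := Matrix.transpose_mul A B
    _ = B * A := by rw [h2, h3]

lemma nnt_mem_xspan {A B : Matrix β γ ℝ} (hA : A ∈ Nspan cc) (hB : B ∈ Nspan cc) :
    A * Bᵀ ∈ Xspan cc := by
  induction hA, hB using Submodule.span_induction₂ with
  | mem_mem x y hx hy =>
    obtain ⟨i, hi1, hi2, rfl⟩ := hx
    obtain ⟨j, hj1, hj2, rfl⟩ := hy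
    exact cc.N_mul_Nt i hi1 hi2 j hj1 hj2
  | zero_left y hy => rw [Matrix.zero_mul]; exact Submodule.zero_mem _
  | zero_right x hx => rw [Matrix.transpose_zero, Matrix.mul_zero]; exact Submodule.zero_mem _
  | add_left x y z _ _ _ h1 h2 => rw [Matrix.add_mul]; exact Submodule.add_mem _ h1 h2
  | add_right x y z _ _ _ h1 h2 =>
      rw [Matrix.transpose_add, Matrix.mul_add]; exact Submodule.add_mem _ h1 h2
  | smul_left r x y _ _ h => rw [Matrix.smul_mul]; exact Submodule.smul_mem _ _ h
  | smul_right r x y _ _ h =>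
      rw [Matrix.transpose_smul, Matrix.mul_smul]; exact Submodule.smul_mem _ _ h

lemma tmul_comm {A B : Matrix β γ ℝ} (hA : A ∈ Nspan cc) (hB : B ∈ Nspan cc) :
    Aᵀ * B = Bᵀ * A := by
  induction hA, hB using Submodule.span_induction₂ with
  | mem_mem x y hx hy =>
    obtain ⟨i, hi1, hi2, rfl⟩ := hx
    obtain ⟨j, hj1, hj2, rfl⟩ := hy
    exact cc.Nt_comm i hi1 hi2 j hj1 hj2
  | zero_left y hy => rw [Matrix.transpose_zero, Matrix.zero_mul, Matrix.mul_zero]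
  | zero_right x hx => rw [Matrix.transpose_zero, Matrix.zero_mul, Matrix.mul_zero]
  | add_left x y z _ _ _ h1 h2 =>
      rw [Matrix.transpose_add, Matrix.add_mul, Matrix.mul_add, h1, h2]
  | add_right x y z _ _ _ h1 h2 =>
      rw [Matrix.transpose_add, Matrix.mul_add, Matrix.add_mul, h1, h2]
  | smul_left r x y _ _ h =>
      rw [Matrix.transpose_smul, Matrix.smul_mul, Matrix.mul_smul, h]
  | smul_right r x y _ _ h =>
      rw [Matrix.transpose_smul, Matrix.mul_smul, Matrix.smul_mul, h]

lemma xspan_mul_nspan {A : Matrix β β ℝ} {m : Matrix β γ ℝ} (hA : A ∈ Xspan cc)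
    (hm : m ∈ Nspan cc) : A * m ∈ Nspan cc := by
  induction hA using Submodule.span_induction with
  | mem x hx =>
    obtain ⟨i, hi, rfl⟩ := hx
    induction hm using Submodule.span_induction with
    | mem y hy =>
      obtain ⟨h, hh1, hh2, rfl⟩ := hy
      exact cc.X_mul_N i hi h hh1 hh2
    | zero => rw [Matrix.mul_zero]; exact Submodule.zero_mem _
    | add y z _ _ h1 h2 => rw [Matrix.mul_add]; exact Submodule.add_mem _ h1 h2
    | smul a y _ h => rw [Matrix.mul_smul]; exact Submodule.smul_mem _ _ h
  | zero => rw [Matrix.zero_mul]; exact Submodule.zero_mem _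
  | add x y _ _ h1 h2 => rw [Matrix.add_mul]; exact Submodule.add_mem _ h1 h2
  | smul a x _ h => rw [Matrix.smul_mul]; exact Submodule.smul_mem _ _ h

lemma trace_mul_t {m n : Type*} [Fintype m] [Fintype n] (A B : Matrix m n ℝ) :
    Matrix.trace (A * Bᵀ) = ∑ u : m, ∑ v : n, A u v * B u v := by
  simp [Matrix.trace, Matrix.diag, Matrix.mul_apply, Matrix.transpose_apply]

lemma zero_of_trace_mul_t {m n : Type*} [Fintype m] [Fintype n] {A : Matrix m n ℝ}
    (h : Matrix.trace (A * Aᵀ) = 0) : A = 0 := by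
  rw [trace_mul_t] at h
  ext u v
  have h1 : ∀ u : m, (0:ℝ) ≤ ∑ v : n, A u v * A u v :=
    fun u => Finset.sum_nonneg fun v _ => mul_self_nonneg _
  have h2 : ∑ v : n, A u v * A u v = 0 := by
    have := (Finset.sum_eq_zero_iff_of_nonneg fun u _ => h1 u).mp h u (Finset.mem_univ u)
    exact this
  have h3 := (Finset.sum_eq_zero_iff_of_nonneg
    fun v _ => mul_self_nonneg (A u v)).mp h2 v (Finset.mem_univ v)
  have := mul_self_eq_zero.mp h3
  simpa using this

lemma L_mem_xspan (sb : SecondBasis cc) {t : ℕ} (ht : t ≤ cc.tb) : sb.L t ∈ Xspan cc := by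
  rw [Xspan, ← sb.L_span]
  exact Submodule.subset_span ⟨t, ht, rfl⟩

lemma D_mem_nspan (sb : SecondBasis cc) {r : ℕ} (hr : r ≤ cc.tbg - 1) : sb.D r ∈ Nspan cc := by
  rw [Nspan, ← sb.D_span]
  exact Submodule.subset_span ⟨r, hr, rfl⟩

lemma L_ne_zero (sb : SecondBasis cc) {t : ℕ} (ht : t ≤ cc.tb) : sb.L t ≠ 0 :=
  sb.L_indep.ne_zero (⟨t, by omega⟩ : Fin (cc.tb + 1))

lemma scalar_rep (sb : SecondBasis cc) {t : ℕ} (ht : t ≤ cc.tb) {m n : Matrix β γ ℝ} (hm : m ∈ Nspan cc)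
    (hn : n ∈ Nspan cc) :
    ∃ c : ℝ, (sb.L t * m) * (sb.L t * n)ᵀ = c • sb.L t := by
  have hx : sb.L t * m ∈ Nspan cc := xspan_mul_nspan cc (L_mem_xspan cc sb ht) hm
  have hy : sb.L t * n ∈ Nspan cc := xspan_mul_nspan cc (L_mem_xspan cc sb ht) hn
  have hxy : (sb.L t * m) * (sb.L t * n)ᵀ ∈ Xspan cc := nnt_mem_xspan cc hx hy
  have hmem : (sb.L t * m) * (sb.L t * n)ᵀ ∈
      Submodule.span ℝ (Set.range fun r : Fin (cc.tb + 1) => sb.L r.val) := by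
    rw [← set_range_eq sb.L cc.tb, sb.L_span]
    exact hxy
  obtain ⟨c, hc⟩ := (Submodule.mem_span_range_iff_exists_fun ℝ).mp hmem
  set tt : Fin (cc.tb + 1) := ⟨t, by omega⟩ with htt
  refine ⟨c tt, ?_⟩
  have hzero : ∀ v : Fin (cc.tb + 1), v ≠ tt → c v = 0 := by
    intro v hv
    have hvt : v.val ≠ t := fun h => hv (Fin.ext h)
    have hvb : v.val ≤ cc.tb := by omega
    -- multiply the representation by L v on the left
    have h1 : sb.L v.val * ((sb.L t * m) * (sb.L t * n)ᵀ) = 0 := by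
      rw [← Matrix.mul_assoc, ← Matrix.mul_assoc, sb.L_mul_L v.val hvb t ht, if_neg hvt,
        Matrix.zero_mul, Matrix.zero_mul]
    have h2 : sb.L v.val * (∑ u : Fin (cc.tb + 1), c u • sb.L u.val) = c v • sb.L v.val := by
      rw [Finset.mul_sum]
      rw [Finset.sum_eq_single v]
      · rw [Matrix.mul_smul, sb.L_mul_L v.val hvb v.val hvb, if_pos rfl]
      · intro u _ hu
        rw [Matrix.mul_smul, sb.L_mul_L v.val hvb u.val (by omega), if_neg (fun h => hu (Fin.ext h.symm)), smul_zero]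
      · intro h
        exact absurd (Finset.mem_univ v) h
    rw [hc, h1] at h2
    rcases smul_eq_zero.mp h2.symm with h | h
    · exact h
    · exact absurd h (L_ne_zero cc sb hvb)
  calc (sb.L t * m) * (sb.L t * n)ᵀ = ∑ u : Fin (cc.tb + 1), c u • sb.L u.val := hc.symm
    _ = c tt • sb.L tt.val := by
        rw [Finset.sum_eq_single tt]
        · intro u _ hu
          rw [hzero u hu, zero_smul]
        · intro h
          exact absurd (Finset.mem_univ tt) h
    _ = c tt • sb.L t := rfl

lemma W_line (sb : SecondBasis cc) {t : ℕ} (ht : t ≤ cc.tb) :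
    ∃ g : Matrix β γ ℝ, ∀ m ∈ Nspan cc, ∃ c : ℝ, sb.L t * m = c • g := by
  by_cases hz : ∀ m ∈ Nspan cc, sb.L t * m = 0
  · exact ⟨0, fun m hm => ⟨0, by rw [hz m hm, zero_smul]⟩⟩
  · push_neg at hz
    obtain ⟨m0, hm0, hx0⟩ := hz
    refine ⟨sb.L t * m0, fun m hm => ?_⟩
    set x := sb.L t * m0 with hxdef
    set y := sb.L t * m with hydef
    have hx : x ∈ Nspan cc := xspan_mul_nspan cc (L_mem_xspan cc sb ht) hm0
    have hy : y ∈ Nspan cc := xspan_mul_nspan cc (L_mem_xspan cc sb ht) hm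
    obtain ⟨a, ha⟩ := scalar_rep cc sb ht hm0 hm0
    obtain ⟨f, hf⟩ := scalar_rep cc sb ht hm0 hm
    rw [← hxdef] at ha hf
    rw [← hydef] at hf
    have hLx : sb.L t * x = x := by
      rw [hxdef, ← Matrix.mul_assoc, sb.L_mul_L t ht t ht, if_pos rfl]
    have hLy : sb.L t * y = y := by
      rw [hydef, ← Matrix.mul_assoc, sb.L_mul_L t ht t ht, if_pos rfl]
    have key : a • y = f • x := by
      calc a • y = (a • sb.L t) * y := by rw [Matrix.smul_mul, hLy]
        _ = (x * xᵀ) * y := by rw [← ha]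
        _ = x * (xᵀ * y) := Matrix.mul_assoc _ _ _
        _ = x * (yᵀ * x) := by rw [tmul_comm cc hx hy]
        _ = (x * yᵀ) * x := (Matrix.mul_assoc _ _ _).symm
        _ = (f • sb.L t) * x := by rw [hf]
        _ = f • x := by rw [Matrix.smul_mul, hLx]
    have ha0 : a ≠ 0 := by
      intro h0
      rw [h0, zero_smul] at ha
      exact hx0 (zero_of_trace_mul_t (by rw [ha, Matrix.trace_zero]))
    refine ⟨a⁻¹ * f, ?_⟩
    have := congrArg (fun M => a⁻¹ • M) key
    simpa [smul_smul, inv_mul_cancel₀ ha0] using this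

lemma tbg_le (sb : SecondBasis cc) : cc.tbg ≤ cc.tb + 1 := by
  have hW : ∀ t : Fin (cc.tb + 1), ∃ g : Matrix β γ ℝ,
      ∀ m ∈ Nspan cc, ∃ c : ℝ, sb.L t.val * m = c • g :=
    fun t => W_line cc sb (by omega : t.val ≤ cc.tb)
  choose g hg using hW
  set P := Submodule.span ℝ (Set.range g) with hP
  have hD : ∀ r : Fin cc.tbg, sb.D r.val ∈ P := by
    intro r
    have hDr : sb.D r.val ∈ Nspan cc := D_mem_nspan cc sb (by have h2 := r.2; have := cc.tbg_pos; omega)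
    have hrepr : sb.D r.val = ∑ t : Fin (cc.tb + 1), sb.L t.val * sb.D r.val := by
      rw [← Matrix.sum_mul]
      rw [show ∑ t : Fin (cc.tb + 1), sb.L t.val = 1 by
        rw [Fin.sum_univ_eq_sum_range]; exact sb.L_sum]
      rw [Matrix.one_mul]
    rw [hrepr]
    apply Submodule.sum_mem
    intro t _
    obtain ⟨c, hc⟩ := hg t (sb.D r.val) hDr
    rw [hc]
    exact Submodule.smul_mem _ _ (Submodule.subset_span ⟨t, rfl⟩)
  haveI : Module.Finite ℝ P := FiniteDimensional.span_of_finite ℝ (Set.finite_range g)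
  have hind : LinearIndependent ℝ (fun r : Fin cc.tbg => (⟨sb.D r.val, hD r⟩ : P)) := by
    have h := sb.D_indep
    exact h.of_comp P.subtype
  have hcard : Fintype.card (Fin cc.tbg) ≤ Module.finrank ℝ P :=
    hind.fintype_card_le_finrank
  have hfr : Module.finrank ℝ P ≤ cc.tb + 1 := by
    refine le_trans (finrank_span_le_card (Set.range g)) ?_
    have := Fintype.card_range_le g
    rw [Set.toFinset_card]
    simpa using this
  simpa using le_trans hcard hfr

lemma D_orth (sb : SecondBasis cc) {r s : ℕ} (hr : r ≤ cc.tbg - 1) (hs : s ≤ cc.tbg - 1) (hne : r ≠ s) :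
    Matrix.trace (sb.D r * (sb.D s)ᵀ) = 0 := by
  have htb := tbg_le cc sb
  have h1 := cc.tbg_pos
  have hrb : r ≤ cc.tb := by omega
  have hsb : s ≤ cc.tb := by omega
  have hP : (sb.D s)ᵀ * sb.D r = 0 := by
    apply zero_of_trace_mul_t
    rw [Matrix.transpose_mul, Matrix.transpose_transpose]
    calc Matrix.trace (((sb.D s)ᵀ * sb.D r) * ((sb.D r)ᵀ * sb.D s))
        = Matrix.trace ((sb.D s)ᵀ * (sb.D r * ((sb.D r)ᵀ * sb.D s))) := by
          simp only [Matrix.mul_assoc]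
      _ = Matrix.trace ((sb.D r * ((sb.D r)ᵀ * sb.D s)) * (sb.D s)ᵀ) :=
          Matrix.trace_mul_comm _ _
      _ = Matrix.trace ((sb.D r * (sb.D r)ᵀ) * (sb.D s * (sb.D s)ᵀ)) := by
          simp only [Matrix.mul_assoc]
      _ = Matrix.trace (sb.L r * sb.L s) := by
          rw [← sb.L_eq_DDt r hr, ← sb.L_eq_DDt s hs]
      _ = 0 := by rw [sb.L_mul_L r hrb s hsb, if_neg hne, Matrix.trace_zero]
  rw [Matrix.trace_mul_comm, hP, Matrix.trace_zero]

lemma swap3 (cc : BipartiteCC β γ) (f : β → γ → ℕ → ℝ) :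
    (∑ u : β, ∑ v : γ, ∑ l ∈ Finset.Icc 1 cc.tbg, f u v l)
      = ∑ l ∈ Finset.Icc 1 cc.tbg, ∑ u : β, ∑ v : γ, f u v l := by
  have h1 : ∀ u : β, (∑ v : γ, ∑ l ∈ Finset.Icc 1 cc.tbg, f u v l)
      = ∑ l ∈ Finset.Icc 1 cc.tbg, ∑ v : γ, f u v l := fun u => Finset.sum_comm
  rw [Finset.sum_congr rfl fun u _ => h1 u]
  exact Finset.sum_comm

end BCCaux
open BCCaux in
/-- formula for the Krein parameters `Δ i j h` defined by
`D i ∘ D j = (1/√(|β||γ|)) ∑ₕ Δ i j h • D h`, and its symmetry in the two fibres. -/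
theorem bipartiteCC_krein_Delta_formula (β γ : Type) [Fintype β] [DecidableEq β]
    [Nonempty β] [Fintype γ] [DecidableEq γ] [Nonempty γ]
    (cc : BipartiteCC β γ) (sb : SecondBasis cc)
    (Q : ℕ → ℕ → ℝ)
    (hQ : ∀ i, i ≤ cc.tbg - 1 →
      sb.D i = (Real.sqrt ((Fintype.card β : ℝ) * (Fintype.card γ : ℝ)))⁻¹ •
        ∑ j ∈ Finset.Icc 1 cc.tbg, Q j i • cc.N j)
    (k kt : ℕ → ℝ)
    (hk : ∀ l, 1 ≤ l → l ≤ cc.tbg → ∀ u : β, ∑ v : γ, cc.N l u v = k l)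
    (hkt : ∀ l, 1 ≤ l → l ≤ cc.tbg → ∀ v : γ, ∑ u : β, cc.N l u v = kt l)
    (Del : ℕ → ℕ → ℕ → ℝ)
    (hDel : ∀ i, i ≤ cc.tbg - 1 → ∀ j, j ≤ cc.tbg - 1 →
      Matrix.hadamard (sb.D i) (sb.D j) =
        (Real.sqrt ((Fintype.card β : ℝ) * (Fintype.card γ : ℝ)))⁻¹ •
          ∑ h ∈ Finset.range cc.tbg, Del i j h • sb.D h) :
    ∀ i, i ≤ cc.tbg - 1 → ∀ j, j ≤ cc.tbg - 1 → ∀ h, h ≤ cc.tbg - 1 →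
      Matrix.trace (sb.L h) ≠ 0 →
      Del i j h = ((Fintype.card γ : ℝ) * Matrix.trace (sb.L h))⁻¹ *
          ∑ l ∈ Finset.Icc 1 cc.tbg, Q l h * Q l i * Q l j * k l ∧
      Del i j h = ((Fintype.card β : ℝ) * Matrix.trace (sb.R h))⁻¹ *
          ∑ l ∈ Finset.Icc 1 cc.tbg, Q l h * Q l i * Q l j * kt l := by
  intro i hi j hj h hh hLh
  have htbg := cc.tbg_pos
  set cb := ((Fintype.card β : ℝ)) with hcbdef
  set cg := ((Fintype.card γ : ℝ)) with hcgdef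
  have hcb : 0 < cb := by rw [hcbdef]; exact_mod_cast Fintype.card_pos
  have hcg : 0 < cg := by rw [hcgdef]; exact_mod_cast Fintype.card_pos
  set c := Real.sqrt (cb * cg) with hcdef
  have hc : 0 < c := Real.sqrt_pos.mpr (by positivity)
  have hc2 : c * c = cb * cg := Real.mul_self_sqrt (by positivity)
  -- entrywise formula for the D's
  have hent : ∀ x, x ≤ cc.tbg - 1 → ∀ u v,
      sb.D x u v = c⁻¹ * ∑ l ∈ Finset.Icc 1 cc.tbg, Q l x * cc.N l u v := by
    intro x hx u v
    rw [hQ x hx]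
    simp [Matrix.smul_apply, Matrix.sum_apply, smul_eq_mul, Finset.mul_sum]
  -- total sums of the N's
  have hNtot : ∀ l ∈ Finset.Icc 1 cc.tbg, ∑ u : β, ∑ v : γ, cc.N l u v = cb * k l := by
    intro l hl
    rw [Finset.mem_Icc] at hl
    rw [Finset.sum_congr rfl fun u _ => hk l hl.1 hl.2 u]
    rw [Finset.sum_const, Finset.card_univ, nsmul_eq_mul]
  have hNtot' : ∀ l ∈ Finset.Icc 1 cc.tbg, ∑ u : β, ∑ v : γ, cc.N l u v = cg * kt l := by
    intro l hl
    rw [Finset.mem_Icc] at hl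
    rw [show ∑ u : β, ∑ v : γ, cc.N l u v = ∑ v : γ, ∑ u : β, cc.N l u v from Finset.sum_comm]
    rw [Finset.sum_congr rfl fun v _ => hkt l hl.1 hl.2 v]
    rw [Finset.sum_const, Finset.card_univ, nsmul_eq_mul]
  set T := Matrix.trace (Matrix.hadamard (sb.D i) (sb.D j) * (sb.D h)ᵀ) with hT
  -- computing T via the second basis
  have way1 : T = c⁻¹ * (Del i j h * Matrix.trace (sb.L h)) := by
    rw [hT, hDel i hi j hj]
    rw [Matrix.smul_mul, Matrix.trace_smul, smul_eq_mul]
    congr 1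
    rw [Matrix.sum_mul, Matrix.trace_sum]
    rw [Finset.sum_eq_single h]
    · rw [Matrix.smul_mul, Matrix.trace_smul, smul_eq_mul, ← sb.L_eq_DDt h hh]
    · intro h' hh' hne
      rw [Finset.mem_range] at hh'
      rw [Matrix.smul_mul, Matrix.trace_smul, smul_eq_mul,
        D_orth cc sb (by omega : h' ≤ cc.tbg - 1) hh hne, mul_zero]
    · intro habs
      exact absurd (Finset.mem_range.mpr (by omega : h < cc.tbg)) habs
  -- computing T via the N's
  have way2 : T = (c⁻¹ * (c⁻¹ * c⁻¹)) *
      ∑ l ∈ Finset.Icc 1 cc.tbg, (Q l i * Q l j) * Q l h * (cb * k l) := by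
    have hterm : ∀ u v, Matrix.hadamard (sb.D i) (sb.D j) u v * sb.D h u v
        = (c⁻¹ * (c⁻¹ * c⁻¹)) *
          ∑ l ∈ Finset.Icc 1 cc.tbg, ((Q l i * Q l j) * Q l h) * cc.N l u v := by
      intro u v
      rw [Matrix.hadamard_apply, hent i hi u v, hent j hj u v, hent h hh u v]
      have h1 := collapse cc (fun l => Q l i) (fun l => Q l j) u v
      have h2 := collapse cc (fun l => Q l i * Q l j) (fun l => Q l h) u v
      calc (c⁻¹ * ∑ l ∈ Finset.Icc 1 cc.tbg, Q l i * cc.N l u v) *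
            (c⁻¹ * ∑ l ∈ Finset.Icc 1 cc.tbg, Q l j * cc.N l u v) *
            (c⁻¹ * ∑ l ∈ Finset.Icc 1 cc.tbg, Q l h * cc.N l u v)
          = (c⁻¹ * (c⁻¹ * c⁻¹)) *
            (((∑ l ∈ Finset.Icc 1 cc.tbg, Q l i * cc.N l u v) *
              (∑ l ∈ Finset.Icc 1 cc.tbg, Q l j * cc.N l u v)) *
              (∑ l ∈ Finset.Icc 1 cc.tbg, Q l h * cc.N l u v)) := by ring
        _ = _ := by rw [h1, h2]
    calc T = ∑ u : β, ∑ v : γ, Matrix.hadamard (sb.D i) (sb.D j) u v * sb.D h u v := by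
          rw [hT, trace_mul_t]
      _ = ∑ u : β, ∑ v : γ, (c⁻¹ * (c⁻¹ * c⁻¹)) *
            ∑ l ∈ Finset.Icc 1 cc.tbg, ((Q l i * Q l j) * Q l h) * cc.N l u v :=
          Finset.sum_congr rfl fun u _ => Finset.sum_congr rfl fun v _ => hterm u v
      _ = ∑ u : β, ∑ v : γ, ∑ l ∈ Finset.Icc 1 cc.tbg, (c⁻¹ * (c⁻¹ * c⁻¹)) *
            (((Q l i * Q l j) * Q l h) * cc.N l u v) :=
          Finset.sum_congr rfl fun u _ => Finset.sum_congr rfl fun v _ => by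
            rw [Finset.mul_sum]
      _ = ∑ l ∈ Finset.Icc 1 cc.tbg, ∑ u : β, ∑ v : γ, (c⁻¹ * (c⁻¹ * c⁻¹)) *
            (((Q l i * Q l j) * Q l h) * cc.N l u v) := swap3 cc _
      _ = ∑ l ∈ Finset.Icc 1 cc.tbg, (c⁻¹ * (c⁻¹ * c⁻¹)) *
            ((Q l i * Q l j) * Q l h * (cb * k l)) := by
          refine Finset.sum_congr rfl fun l hl => ?_
          simp only [← Finset.mul_sum]
          rw [hNtot l hl]
      _ = (c⁻¹ * (c⁻¹ * c⁻¹)) *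
            ∑ l ∈ Finset.Icc 1 cc.tbg, (Q l i * Q l j) * Q l h * (cb * k l) := by
          rw [Finset.mul_sum]
  -- combine
  have hEq := way1.symm.trans way2
  set trL := Matrix.trace (sb.L h) with htrLdef
  set Sig := ∑ l ∈ Finset.Icc 1 cc.tbg, Q l h * Q l i * Q l j * k l with hSigdef
  set Sig' := ∑ l ∈ Finset.Icc 1 cc.tbg, Q l h * Q l i * Q l j * kt l with hSigdef'
  have hSig : ∑ l ∈ Finset.Icc 1 cc.tbg, (Q l i * Q l j) * Q l h * (cb * k l) = cb * Sig := by
    rw [hSigdef, Finset.mul_sum]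
    exact Finset.sum_congr rfl fun l _ => by ring
  rw [hSig] at hEq
  -- hEq : c⁻¹ * (Del i j h * trL) = c⁻¹ * (c⁻¹ * c⁻¹) * (cb * Sig)
  have hcne : c ≠ 0 := ne_of_gt hc
  have h3 : Del i j h * trL * (cb * cg) = cb * Sig := by
    field_simp at hEq
    have h4 : (Del i j h * trL * (c * c)) * c = (cb * Sig) * c := by linear_combination c * hEq
    have h5 := mul_right_cancel₀ hcne h4
    linear_combination h5 - (Del i j h * trL) * hc2
  have hfirst : Del i j h = (cg * trL)⁻¹ * Sig := by
    have hne : cg * trL ≠ 0 := mul_ne_zero (ne_of_gt hcg) hLh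
    rw [eq_comm, inv_mul_eq_iff_eq_mul₀ hne]
    have h5 : cb * ((cg * trL) * Del i j h) = cb * Sig := by linear_combination h3
    exact (mul_left_cancel₀ (ne_of_gt hcb) h5).symm
  refine ⟨hfirst, ?_⟩
  -- second formula
  have htrR : Matrix.trace (sb.R h) = trL := by
    rw [sb.R_eq_DtD h hh, htrLdef, sb.L_eq_DDt h hh, Matrix.trace_mul_comm]
  have hSS : cb * Sig = cg * Sig' := by
    rw [hSigdef, hSigdef', Finset.mul_sum, Finset.mul_sum]
    refine Finset.sum_congr rfl fun l hl => ?_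
    have e1 := hNtot l hl
    have e2 := hNtot' l hl
    have e3 : cb * k l = cg * kt l := by rw [← e1, ← e2]
    linear_combination (Q l h * Q l i * Q l j) * e3
  rw [htrR, hfirst]
  have hne : cg * trL ≠ 0 := mul_ne_zero (ne_of_gt hcg) hLh
  have hne2 : cb * trL ≠ 0 := mul_ne_zero (ne_of_gt hcb) hLh
  field_simp
  linear_combination hSS
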